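/- arXiv:2503.14038 — 4 statements merged into one kernel-verified Lean document; each statement's English description precedes it below -/
import Mathlib

section
/- For every c ∈ (0, 2/π) there exist γ₀ > 0 and C > 0 such that for every τ > 0, every x ∈ ℝ^d with 1 ≤ |x|_Γ ≤ 4, and every ξ ∈ ℝ^d for which there exists ζ ∈ ℝ^d with ‖Eζ‖₂ = ‖∇_Eφ_τ(x)‖₂, ⟨Eζ, ∇_Eφ_τ(x)⟩ = 0 and ‖Eξ − Eζ‖₂ ≤ γ₀τ, one has ∇_Eφ_τ(x)ᵀ · ∇²_Eφ_τ(x) · ∇_Eφ_τ(x) + (Eξ)ᵀ · ∇²_Eφ_τ(x) · (Eξ) ≥ Cτ³. -/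
open Matrix Real
open scoped BigOperators

noncomputable section

/-- Euclidean norm on `Fin n → ℝ`. -/
def enorm' {n : ℕ} (v : Fin n → ℝ) : ℝ := Real.sqrt (∑ i, v i ^ 2)

/-- The `k×d` matrix whose `j`-th row is `e j`. -/
def rowMat {d k : ℕ} (e : Fin k → Fin d → ℝ) : Matrix (Fin k) (Fin d) ℝ :=
  Matrix.of fun j i => e j i

/-- The graph norm `|x|_Γ = sqrt (xᵀ (EᵀE)⁻¹ x)`. -/
def gNorm {d k : ℕ} (e : Fin k → Fin d → ℝ) (x : Fin d → ℝ) : ℝ :=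
  Real.sqrt (x ⬝ᵥ (((rowMat e)ᵀ * rowMat e)⁻¹ *ᵥ x))

/-- The Carleman weight profile. -/
def phiFun (c t : ℝ) : ℝ :=
  -Real.log t + c * (Real.log t * Real.arctan (Real.log t)
    - (1/2) * Real.log (1 + Real.log t ^ 2))

/-- The Carleman weight `φ_τ(x) = τ φ(|x|_Γ)`. -/
def phiTau {d k : ℕ} (e : Fin k → Fin d → ℝ) (c τ : ℝ) (x : Fin d → ℝ) : ℝ :=
  τ * phiFun c (gNorm e x)

/-- Gradient of a function on `ℝ^d` (vector of partial derivatives). -/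
def grad' {d : ℕ} (ψ : (Fin d → ℝ) → ℝ) (x : Fin d → ℝ) : Fin d → ℝ :=
  fun i => fderiv ℝ ψ x (Pi.single i 1)

/-- Hessian matrix of a function on `ℝ^d`. -/
def hess' {d : ℕ} (ψ : (Fin d → ℝ) → ℝ) (x : Fin d → ℝ) : Matrix (Fin d) (Fin d) ℝ :=
  Matrix.of fun i j => fderiv ℝ (fun y => fderiv ℝ ψ y (Pi.single j 1)) x (Pi.single i 1)

namespace Stmt1Aux

lemma sq_enorm' {n : ℕ} (v : Fin n → ℝ) : enorm' v ^ 2 = v ⬝ᵥ v := by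
  rw [enorm', Real.sq_sqrt (Finset.sum_nonneg fun i _ => sq_nonneg _)]
  simp [dotProduct, sq]

lemma abs_dot_le {n : ℕ} (v w : Fin n → ℝ) : |v ⬝ᵥ w| ≤ enorm' v * enorm' w := by
  have h := Finset.sum_mul_sq_le_sq_mul_sq Finset.univ v w
  have : |v ⬝ᵥ w| = Real.sqrt ((v ⬝ᵥ w)^2) := (Real.sqrt_sq_eq_abs _).symm
  rw [this, enorm', enorm', ← Real.sqrt_mul (Finset.sum_nonneg fun i _ => sq_nonneg _)]
  exact Real.sqrt_le_sqrt (by simpa [dotProduct] using h)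

def dotCLM {n : ℕ} (u : Fin n → ℝ) : (Fin n → ℝ) →L[ℝ] ℝ :=
  ∑ i, u i • (ContinuousLinearMap.proj i : (Fin n → ℝ) →L[ℝ] ℝ)

@[simp] lemma dotCLM_apply {n : ℕ} (u v : Fin n → ℝ) : dotCLM u v = u ⬝ᵥ v := by
  simp [dotCLM, dotProduct]

lemma hasFDerivAt_Qf {d : ℕ} (A : Matrix (Fin d) (Fin d) ℝ) (hA : Aᵀ = A) (x : Fin d → ℝ) :
    HasFDerivAt (fun y => y ⬝ᵥ (A *ᵥ y)) (dotCLM ((2:ℝ) • (A *ᵥ x))) x := by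
  have hsym : ∀ i j, A i j = A j i := fun i j => by
    have := congrFun (congrFun hA j) i
    simpa [Matrix.transpose_apply] using this
  have h1 : ∀ i, HasFDerivAt
      (fun y : Fin d → ℝ =>
        (ContinuousLinearMap.proj i : (Fin d → ℝ) →L[ℝ] ℝ) y * dotCLM (A i) y)
      ((ContinuousLinearMap.proj i : (Fin d → ℝ) →L[ℝ] ℝ) x • dotCLM (A i) +
        dotCLM (A i) x • (ContinuousLinearMap.proj i : (Fin d → ℝ) →L[ℝ] ℝ)) x :=
    fun i => (ContinuousLinearMap.hasFDerivAt _).mul (ContinuousLinearMap.hasFDerivAt _)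
  have h := HasFDerivAt.fun_sum (fun i (_ : i ∈ Finset.univ) => h1 i)
  have hfun : (fun y : Fin d → ℝ => y ⬝ᵥ (A *ᵥ y)) = fun y =>
      ∑ i, (ContinuousLinearMap.proj i : (Fin d → ℝ) →L[ℝ] ℝ) y * dotCLM (A i) y := by
    funext y; simp [dotProduct, Matrix.mulVec]
  rw [hfun]
  refine h.congr_fderiv (Eq.symm ?_)
  ext v
  have key : ∑ i, x i * ((A i) ⬝ᵥ v) = (A *ᵥ x) ⬝ᵥ v := by
    simp only [dotProduct, Matrix.mulVec, Finset.mul_sum, Finset.sum_mul]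
    rw [Finset.sum_comm]
    refine Finset.sum_congr rfl fun j _ => Finset.sum_congr rfl fun i _ => by
      rw [hsym i j]; ring
  simp only [ContinuousLinearMap.sum_apply, ContinuousLinearMap.add_apply,
    ContinuousLinearMap.smul_apply, ContinuousLinearMap.proj_apply, dotCLM_apply,
    smul_eq_mul, Finset.sum_add_distrib]
  rw [key]
  simp [dotProduct, Matrix.smul_mulVec, mul_two, Finset.sum_add_distrib, mul_comm,
    mul_assoc, mul_left_comm]
  simp [Matrix.mulVec, dotProduct, mul_add, Finset.sum_add_distrib]

def phiD (c t : ℝ) : ℝ := (-1 + c * Real.arctan (Real.log t)) / t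
def phiDD (c t : ℝ) : ℝ :=
  (c / (1 + Real.log t ^ 2) + 1 - c * Real.arctan (Real.log t)) / t ^ 2

lemma hasDerivAt_phiFun (c t : ℝ) (ht : 0 < t) : HasDerivAt (phiFun c) (phiD c t) t := by
  have ht' := ne_of_gt ht
  have hl := Real.hasDerivAt_log ht'
  have hpos : (0:ℝ) < 1 + Real.log t ^ 2 := by positivity
  have ha : HasDerivAt (fun s => Real.arctan (Real.log s))
      (1 / (1 + Real.log t ^ 2) * t⁻¹) t :=
    (Real.hasDerivAt_arctan (Real.log t)).comp t hl
  have hmul : HasDerivAt (fun s => Real.log s * Real.arctan (Real.log s))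
      (t⁻¹ * Real.arctan (Real.log t) + Real.log t * (1 / (1 + Real.log t ^ 2) * t⁻¹)) t :=
    hl.mul ha
  have hsq : HasDerivAt (fun s => 1 + Real.log s ^ 2)
      ((2 : ℕ) * Real.log t ^ 1 * t⁻¹) t := (hl.pow 2).const_add 1
  have hlog2 : HasDerivAt (fun s => Real.log (1 + Real.log s ^ 2))
      ((1 + Real.log t ^ 2)⁻¹ * ((2 : ℕ) * Real.log t ^ 1 * t⁻¹)) t := by
    have := (Real.hasDerivAt_log (ne_of_gt hpos)).comp t hsq
    simpa [Function.comp_def] using this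
  have h : HasDerivAt (phiFun c)
      (-t⁻¹ + c * ((t⁻¹ * Real.arctan (Real.log t) + Real.log t * (1 / (1 + Real.log t ^ 2) * t⁻¹))
        - (1/2) * ((1 + Real.log t ^ 2)⁻¹ * ((2 : ℕ) * Real.log t ^ 1 * t⁻¹)))) t := by
    exact (hl.neg).add ((hmul.sub (hlog2.const_mul (1/2))).const_mul c)
  refine h.congr_deriv (Eq.symm ?_)
  rw [phiD]
  field_simp
  ring

lemma hasDerivAt_phiD (c t : ℝ) (ht : 0 < t) : HasDerivAt (phiD c) (phiDD c t) t := by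
  have ht' := ne_of_gt ht
  have hl := Real.hasDerivAt_log ht'
  have ha : HasDerivAt (fun s => Real.arctan (Real.log s))
      (1 / (1 + Real.log t ^ 2) * t⁻¹) t :=
    (Real.hasDerivAt_arctan (Real.log t)).comp t hl
  have hnum : HasDerivAt (fun s => -1 + c * Real.arctan (Real.log s))
      (c * (1 / (1 + Real.log t ^ 2) * t⁻¹)) t := (ha.const_mul c).const_add (-1)
  have h := hnum.div (hasDerivAt_id t) ht'
  refine h.congr_deriv (Eq.symm ?_)
  rw [phiDD]
  simp only [id_eq]
  have hpos : (0:ℝ) < 1 + Real.log t ^ 2 := by positivity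
  field_simp
  ring

lemma hasFDerivAt_rho {d : ℕ} (A : Matrix (Fin d) (Fin d) ℝ) (hA : Aᵀ = A) (y : Fin d → ℝ)
    (hy : 0 < y ⬝ᵥ (A *ᵥ y)) :
    HasFDerivAt (fun z => Real.sqrt (z ⬝ᵥ (A *ᵥ z)))
      (dotCLM ((Real.sqrt (y ⬝ᵥ (A *ᵥ y)))⁻¹ • (A *ᵥ y))) y := by
  have h := (Real.hasDerivAt_sqrt (ne_of_gt hy)).comp_hasFDerivAt y (hasFDerivAt_Qf A hA y)
  have hs : Real.sqrt (y ⬝ᵥ (A *ᵥ y)) ≠ 0 := ne_of_gt (Real.sqrt_pos.2 hy)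
  refine h.congr_fderiv (Eq.symm ?_)
  ext v
  simp only [dotCLM_apply, ContinuousLinearMap.smul_apply, smul_dotProduct,
    smul_eq_mul]
  field_simp

lemma hasFDerivAt_psi {d : ℕ} (A : Matrix (Fin d) (Fin d) ℝ) (hA : Aᵀ = A) (c τ : ℝ)
    (y : Fin d → ℝ) (hy : 0 < y ⬝ᵥ (A *ᵥ y)) :
    HasFDerivAt (fun z => τ * phiFun c (Real.sqrt (z ⬝ᵥ (A *ᵥ z))))
      (dotCLM ((τ * phiD c (Real.sqrt (y ⬝ᵥ (A *ᵥ y))) / Real.sqrt (y ⬝ᵥ (A *ᵥ y)))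
        • (A *ᵥ y))) y := by
  have hρ : 0 < Real.sqrt (y ⬝ᵥ (A *ᵥ y)) := Real.sqrt_pos.2 hy
  have h1 := (hasDerivAt_phiFun c _ hρ).comp_hasFDerivAt y (hasFDerivAt_rho A hA y hy)
  have h2 := h1.const_mul τ
  refine h2.congr_fderiv (Eq.symm ?_)
  ext v
  simp only [dotCLM_apply, ContinuousLinearMap.smul_apply, smul_dotProduct,
    smul_eq_mul]
  field_simp

@[simp] lemma dotCLM_single {n : ℕ} (u : Fin n → ℝ) (i : Fin n) :
    dotCLM u (Pi.single i 1) = u i := by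
  rw [dotCLM_apply]
  simp [dotProduct, Pi.single_apply]

lemma grad_psi {d : ℕ} (A : Matrix (Fin d) (Fin d) ℝ) (hA : Aᵀ = A) (c τ : ℝ)
    (y : Fin d → ℝ) (hy : 0 < y ⬝ᵥ (A *ᵥ y)) :
    grad' (fun z => τ * phiFun c (Real.sqrt (z ⬝ᵥ (A *ᵥ z)))) y =
      (τ * phiD c (Real.sqrt (y ⬝ᵥ (A *ᵥ y))) / Real.sqrt (y ⬝ᵥ (A *ᵥ y))) • (A *ᵥ y) := by
  funext i
  rw [grad']
  rw [(hasFDerivAt_psi A hA c τ y hy).fderiv]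
  simp

lemma continuous_Qf {d : ℕ} (A : Matrix (Fin d) (Fin d) ℝ) :
    Continuous (fun y : Fin d → ℝ => y ⬝ᵥ (A *ᵥ y)) := by
  simp only [dotProduct, Matrix.mulVec]
  fun_prop

lemma hasFDerivAt_sfun {d : ℕ} (A : Matrix (Fin d) (Fin d) ℝ) (hA : Aᵀ = A) (c τ : ℝ)
    (x : Fin d → ℝ) (hx : 0 < x ⬝ᵥ (A *ᵥ x)) :
    HasFDerivAt (fun z => τ * phiD c (Real.sqrt (z ⬝ᵥ (A *ᵥ z))) / Real.sqrt (z ⬝ᵥ (A *ᵥ z)))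
      (dotCLM (((τ * (phiDD c (Real.sqrt (x ⬝ᵥ (A *ᵥ x))) * Real.sqrt (x ⬝ᵥ (A *ᵥ x))
          - phiD c (Real.sqrt (x ⬝ᵥ (A *ᵥ x)))) / (x ⬝ᵥ (A *ᵥ x))) *
        (Real.sqrt (x ⬝ᵥ (A *ᵥ x)))⁻¹) • (A *ᵥ x))) x := by
  have hρ : 0 < Real.sqrt (x ⬝ᵥ (A *ᵥ x)) := Real.sqrt_pos.2 hx
  have hρ' := ne_of_gt hρ
  have hF : HasDerivAt (fun t => phiD c t / t)
      ((phiDD c (Real.sqrt (x ⬝ᵥ (A *ᵥ x))) * Real.sqrt (x ⬝ᵥ (A *ᵥ x))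
        - phiD c (Real.sqrt (x ⬝ᵥ (A *ᵥ x)))) / (Real.sqrt (x ⬝ᵥ (A *ᵥ x))) ^ 2)
      (Real.sqrt (x ⬝ᵥ (A *ᵥ x))) := by
    have := (hasDerivAt_phiD c _ hρ).div (hasDerivAt_id (Real.sqrt (x ⬝ᵥ (A *ᵥ x)))) hρ'
    refine this.congr_deriv (Eq.symm ?_)
    simp only [id_eq]
    ring
  have h1 := (hF.comp_hasFDerivAt x (hasFDerivAt_rho A hA x hx)).const_mul τ
  have hfun : (fun z => τ * phiD c (Real.sqrt (z ⬝ᵥ (A *ᵥ z))) / Real.sqrt (z ⬝ᵥ (A *ᵥ z)))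
      = fun z => τ * (phiD c (Real.sqrt (z ⬝ᵥ (A *ᵥ z))) / Real.sqrt (z ⬝ᵥ (A *ᵥ z))) := by
    funext z; ring
  rw [hfun]
  refine h1.congr_fderiv (Eq.symm ?_)
  ext v
  rw [Real.sq_sqrt (le_of_lt hx)] at *
  simp only [dotCLM_apply, ContinuousLinearMap.smul_apply, smul_dotProduct,
    smul_eq_mul]
  ring

lemma hess_psi {d : ℕ} (A : Matrix (Fin d) (Fin d) ℝ) (hA : Aᵀ = A) (c τ : ℝ)
    (x : Fin d → ℝ) (hx : 0 < x ⬝ᵥ (A *ᵥ x)) (i j : Fin d) :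
    hess' (fun z => τ * phiFun c (Real.sqrt (z ⬝ᵥ (A *ᵥ z)))) x i j =
      (τ * phiD c (Real.sqrt (x ⬝ᵥ (A *ᵥ x))) / Real.sqrt (x ⬝ᵥ (A *ᵥ x))) * A i j +
      ((τ * (phiDD c (Real.sqrt (x ⬝ᵥ (A *ᵥ x))) * Real.sqrt (x ⬝ᵥ (A *ᵥ x))
          - phiD c (Real.sqrt (x ⬝ᵥ (A *ᵥ x)))) / (x ⬝ᵥ (A *ᵥ x))) *
        (Real.sqrt (x ⬝ᵥ (A *ᵥ x)))⁻¹) * (A *ᵥ x) i * (A *ᵥ x) j := by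
  have hsym : ∀ i j, A i j = A j i := fun i j => by
    have := congrFun (congrFun hA j) i
    simpa [Matrix.transpose_apply] using this
  have hopen : IsOpen {y : Fin d → ℝ | 0 < y ⬝ᵥ (A *ᵥ y)} :=
    isOpen_lt continuous_const (continuous_Qf A)
  have hev : (fun y => fderiv ℝ (fun z => τ * phiFun c (Real.sqrt (z ⬝ᵥ (A *ᵥ z)))) y
        (Pi.single j 1)) =ᶠ[nhds x]
      (fun y => τ * phiD c (Real.sqrt (y ⬝ᵥ (A *ᵥ y))) / Real.sqrt (y ⬝ᵥ (A *ᵥ y))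
        * (A *ᵥ y) j) := by
    filter_upwards [hopen.mem_nhds hx] with y hy
    rw [(hasFDerivAt_psi A hA c τ y hy).fderiv]
    simp
  have hG : HasFDerivAt (fun y => τ * phiD c (Real.sqrt (y ⬝ᵥ (A *ᵥ y)))
        / Real.sqrt (y ⬝ᵥ (A *ᵥ y)) * dotCLM (A j) y)
      ((τ * phiD c (Real.sqrt (x ⬝ᵥ (A *ᵥ x))) / Real.sqrt (x ⬝ᵥ (A *ᵥ x))) • dotCLM (A j)
        + dotCLM (A j) x •
          dotCLM (((τ * (phiDD c (Real.sqrt (x ⬝ᵥ (A *ᵥ x))) * Real.sqrt (x ⬝ᵥ (A *ᵥ x))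
            - phiD c (Real.sqrt (x ⬝ᵥ (A *ᵥ x)))) / (x ⬝ᵥ (A *ᵥ x))) *
            (Real.sqrt (x ⬝ᵥ (A *ᵥ x)))⁻¹) • (A *ᵥ x))) x :=
    (hasFDerivAt_sfun A hA c τ x hx).mul (dotCLM (A j)).hasFDerivAt
  have hfun2 : (fun y : Fin d → ℝ => τ * phiD c (Real.sqrt (y ⬝ᵥ (A *ᵥ y)))
        / Real.sqrt (y ⬝ᵥ (A *ᵥ y)) * (A *ᵥ y) j)
      = fun y => τ * phiD c (Real.sqrt (y ⬝ᵥ (A *ᵥ y))) / Real.sqrt (y ⬝ᵥ (A *ᵥ y))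
        * dotCLM (A j) y := by
    funext y
    rw [dotCLM_apply]
    rfl
  rw [hess', Matrix.of_apply, hev.fderiv_eq, hfun2, hG.fderiv]
  simp only [ContinuousLinearMap.add_apply, ContinuousLinearMap.smul_apply, dotCLM_single,
    smul_eq_mul, Pi.smul_apply]
  have h1 : dotCLM (A j) x = (A *ᵥ x) j := by rw [dotCLM_apply]; rfl
  rw [h1, hsym i j]
  ring

end Stmt1Aux

set_option maxHeartbeats 4000000

/-- Lemma 3.1: lower bound for the weight on a conic neighbourhood of the
joint characteristic set. -/
theorem stmt1 (d k : ℕ) (hd : 1 ≤ d) (hdk : d ≤ k)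
    (e : Fin k → Fin d → ℝ) (hspan : Submodule.span ℝ (Set.range e) = ⊤)
    (c : ℝ) (hc0 : 0 < c) (hc1 : c < 2 / Real.pi) :
    ∃ γ₀ > (0 : ℝ), ∃ C > (0 : ℝ), ∀ τ > (0 : ℝ), ∀ x : Fin d → ℝ,
      1 ≤ gNorm e x → gNorm e x ≤ 4 →
      ∀ ξ : Fin d → ℝ,
        (∃ ζ : Fin d → ℝ,
            enorm' (rowMat e *ᵥ ζ) = enorm' (rowMat e *ᵥ grad' (phiTau e c τ) x) ∧
            (rowMat e *ᵥ ζ) ⬝ᵥ (rowMat e *ᵥ grad' (phiTau e c τ) x) = 0 ∧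
            enorm' (rowMat e *ᵥ ξ - rowMat e *ᵥ ζ) ≤ γ₀ * τ) →
        (rowMat e *ᵥ grad' (phiTau e c τ) x) ⬝ᵥ
            ((rowMat e * hess' (phiTau e c τ) x * (rowMat e)ᵀ) *ᵥ
              (rowMat e *ᵥ grad' (phiTau e c τ) x))
          + (rowMat e *ᵥ ξ) ⬝ᵥ
            ((rowMat e * hess' (phiTau e c τ) x * (rowMat e)ᵀ) *ᵥ (rowMat e *ᵥ ξ))
          ≥ C * τ ^ 3 := by
  classical
  set E := rowMat e with hE
  set S : Matrix (Fin d) (Fin d) ℝ := Eᵀ * E with hSdef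
  set A : Matrix (Fin d) (Fin d) ℝ := S⁻¹ with hAdef
  -- E has trivial kernel
  have hinj : ∀ y : Fin d → ℝ, E *ᵥ y = 0 → y = 0 := by
    intro y hy
    have hdot : ∀ z ∈ Set.range e, z ⬝ᵥ y = 0 := by
      rintro z ⟨j, rfl⟩
      have := congrFun hy j
      simpa [hE, rowMat, Matrix.mulVec, dotProduct] using this
    have hy2 : y ⬝ᵥ y = 0 := by
      have hmem : y ∈ Submodule.span ℝ (Set.range e) := by rw [hspan]; trivial
      refine Submodule.span_induction (p := fun z _ => z ⬝ᵥ y = 0)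
        (fun z hz => hdot z hz) (by simp) ?_ ?_ hmem
      · intro p q _ _ hp hq
        rw [add_dotProduct, hp, hq, add_zero]
      · intro r p _ hp
        rw [smul_dotProduct, hp, smul_zero]
    funext i
    have hsum : ∑ j, y j * y j = 0 := hy2
    have h := (Finset.sum_eq_zero_iff_of_nonneg
      (fun j _ => mul_self_nonneg (y j))).1 hsum i (Finset.mem_univ i)
    simpa using mul_self_eq_zero.mp h
  -- S is positive definite
  have hmv0 : ∀ (p q : Fin d → ℝ), (E *ᵥ p) ⬝ᵥ (E *ᵥ q) = p ⬝ᵥ (S *ᵥ q) := by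
    intro p q
    rw [hSdef, ← Matrix.mulVec_mulVec, Matrix.dotProduct_mulVec p Eᵀ,
      Matrix.vecMul_transpose]
  have hSpd : S.PosDef := by
    refine Matrix.posDef_iff_dotProduct_mulVec.mpr ⟨Matrix.isHermitian_conjTranspose_mul_self E, fun y hy => ?_⟩
    have hne : E *ᵥ y ≠ 0 := fun h => hy (hinj y h)
    obtain ⟨j, hj⟩ := Function.ne_iff.mp hne
    have hpos : 0 < (E *ᵥ y) ⬝ᵥ (E *ᵥ y) := by
      refine Finset.sum_pos' (fun i _ => mul_self_nonneg _) ⟨j, Finset.mem_univ j, ?_⟩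
      have h0 : (E *ᵥ y) j ≠ 0 := by simpa using hj
      exact mul_self_pos.mpr h0
    rw [hmv0 y y] at hpos
    simpa using hpos
  have hdet : IsUnit S.det := by
    have := hSpd.det_pos
    exact isUnit_iff_ne_zero.mpr (ne_of_gt this)
  have hSA : S * A = 1 := Matrix.mul_nonsing_inv S hdet
  have hAS : A * S = 1 := Matrix.nonsing_inv_mul S hdet
  have hApd : A.PosDef := hSpd.inv
  have hAsym : Aᵀ = A := by
    have h := hApd.isHermitian
    simpa [Matrix.conjTranspose, Matrix.IsSymm] using h
  have hSAv : ∀ v : Fin d → ℝ, S *ᵥ (A *ᵥ v) = v := by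
    intro v; rw [Matrix.mulVec_mulVec, hSA, Matrix.one_mulVec]
  have hASv : ∀ v : Fin d → ℝ, A *ᵥ (S *ᵥ v) = v := by
    intro v; rw [Matrix.mulVec_mulVec, hAS, Matrix.one_mulVec]
  -- constants
  have hπ := Real.pi_pos
  have hπ3 := Real.pi_gt_three
  have hcpi : c * (Real.pi / 2) < 1 := by
    have h2 : c * Real.pi < 2 := by
      have := (lt_div_iff₀ hπ).mp hc1
      linarith
    linarith
  have hc1' : c < 1 := by nlinarith
  set a₀ : ℝ := (1 - c * (Real.pi / 2)) / 4 with ha₀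
  have ha₀pos : 0 < a₀ := by rw [ha₀]; linarith
  set m : ℝ := a₀ ^ 2 * (c / 80) with hm
  have hmpos : 0 < m := by rw [hm]; positivity
  refine ⟨min 1 (m / 6), by positivity, m / 2, by positivity, ?_⟩
  intro τ hτ x hx1 hx4 ξ ⟨ζ, hζnorm, hζorth, hζclose⟩
  set γ₀ : ℝ := min 1 (m / 6) with hγ₀
  have hγ₀pos : 0 < γ₀ := by positivity
  have hγ₀1 : γ₀ ≤ 1 := min_le_left _ _
  have hγ₀m : γ₀ ≤ m / 6 := min_le_right _ _
  -- basic quantities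
  have hgN : gNorm e x = Real.sqrt (x ⬝ᵥ (A *ᵥ x)) := rfl
  set Q : ℝ := x ⬝ᵥ (A *ᵥ x) with hQdef
  have hQpos : 0 < Q := by
    by_contra h
    push_neg at h
    rw [hgN] at hx1
    rw [show Real.sqrt Q = 0 from Real.sqrt_eq_zero_of_nonpos h] at hx1
    linarith
  set ρ : ℝ := Real.sqrt Q with hρdef
  have hρ1 : (1:ℝ) ≤ ρ := by rw [← hgN]; exact hx1
  have hρ4 : ρ ≤ 4 := by rw [← hgN]; exact hx4
  have hρpos : 0 < ρ := lt_of_lt_of_le zero_lt_one hρ1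
  have hρQ : ρ ^ 2 = Q := Real.sq_sqrt hQpos.le
  have hQ1 : 1 ≤ Q := by nlinarith only [hρ1, hρQ]
  have hQ16 : Q ≤ 16 := by nlinarith only [hρ4, hρ1, hρQ]
  set L : ℝ := Real.log ρ with hL
  have hL0 : 0 ≤ L := Real.log_nonneg hρ1
  have hL2 : L ≤ 2 := by
    have h4 : (4:ℝ) ≤ Real.exp 2 := by
      have he : (2:ℝ) ≤ Real.exp 1 := by
        have := Real.add_one_le_exp (1:ℝ); linarith
      have h22 : Real.exp 2 = Real.exp 1 * Real.exp 1 := by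
        rw [← Real.exp_add]; norm_num
      nlinarith only [he, h22]
    calc L ≤ Real.log 4 := Real.log_le_log hρpos hρ4
      _ ≤ 2 := by
        rw [Real.log_le_iff_le_exp (by norm_num)]
        exact h4
  set a : ℝ := Stmt1Aux.phiD c ρ with ha
  set b : ℝ := Stmt1Aux.phiDD c ρ with hb
  have haval : a = (-1 + c * Real.arctan L) / ρ := rfl
  have hbval : b = (c / (1 + L ^ 2) + 1 - c * Real.arctan L) / ρ ^ 2 := rfl
  -- gradient and hessian formulas (need definitional values)
  have hψ : phiTau e c τ = fun z => τ * phiFun c (Real.sqrt (z ⬝ᵥ (A *ᵥ z))) := rfl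
  set u : Fin d → ℝ := A *ᵥ x with hu
  have hgrad : grad' (phiTau e c τ) x = (τ * a / ρ) • u := by
    rw [hψ]
    exact Stmt1Aux.grad_psi A hAsym c τ x hQpos
  have hxu : x ⬝ᵥ u = Q := rfl
  have hhess : ∀ i j, hess' (phiTau e c τ) x i j =
      (τ * a / ρ) * A i j + ((τ * (b * ρ - a) / Q) * ρ⁻¹) * u i * u j := by
    intro i j
    rw [hψ]
    exact Stmt1Aux.hess_psi A hAsym c τ x hQpos i j
  clear_value Q ρ L a b u
  -- scalar bounds
  have hat : Real.arctan L < Real.pi / 2 := Real.arctan_lt_pi_div_two L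
  have hat0 : 0 ≤ Real.arctan L := by
    rw [← Real.arctan_zero]
    exact Real.arctan_strictMono.monotone hL0
  have hca : c * Real.arctan L < 1 := by
    have h' : c * Real.arctan L ≤ c * (Real.pi / 2) := by
      nlinarith only [mul_nonneg hc0.le
        (by linarith only [hat] : (0:ℝ) ≤ Real.pi / 2 - Real.arctan L)]
    linarith only [h', hcpi]
  have hca0 : 0 ≤ c * Real.arctan L := by positivity
  have haneg : a < 0 := by
    rw [haval]
    apply div_neg_of_neg_of_pos (by linarith only [hca]) hρpos
  have hnaval : -a = (1 - c * Real.arctan L) / ρ := by rw [haval]; ring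
  have hna1 : -a ≤ 1 := by
    rw [hnaval, div_le_one hρpos]
    linarith only [hca0, hρ1]
  have hna0 : a₀ ≤ -a := by
    rw [hnaval, ha₀, div_le_div_iff₀ (by norm_num) hρpos]
    nlinarith only [mul_le_mul_of_nonneg_left hρ4
        (by linarith only [hcpi] : (0:ℝ) ≤ 1 - c * (Real.pi / 2)),
      mul_nonneg hc0.le (by linarith only [hat] : (0:ℝ) ≤ Real.pi / 2 - Real.arctan L)]
  have hbpos : 0 < b := by
    rw [hbval]
    have h1 : 0 < c / (1 + L ^ 2) := by positivity
    apply div_pos (by linarith only [h1, hca]) (by positivity)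
  have hb2 : b ≤ 2 := by
    rw [hbval]
    have h1 : c / (1 + L ^ 2) ≤ c := by
      apply div_le_self hc0.le
      nlinarith only [sq_nonneg L]
    have h2 : (1:ℝ) ≤ ρ ^ 2 := by nlinarith only [hρ1]
    have hnum0 : 0 ≤ c / (1 + L ^ 2) + 1 - c * Real.arctan L := by
      have : 0 ≤ c / (1 + L ^ 2) := by positivity
      linarith only [this, hca]
    calc (c / (1 + L ^ 2) + 1 - c * Real.arctan L) / ρ ^ 2
        ≤ c / (1 + L ^ 2) + 1 - c * Real.arctan L := div_le_self hnum0 h2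
      _ ≤ 2 := by linarith only [h1, hc1', hca0]
  have hkey : b + a / ρ = c / ((1 + L ^ 2) * ρ ^ 2) := by
    rw [hbval, haval]
    have h1 : (1:ℝ) + L ^ 2 ≠ 0 := by positivity
    field_simp
    ring
  have hmain : m ≤ a ^ 2 * (b + a / ρ) := by
    have hden : (0:ℝ) < (1 + L ^ 2) * ρ ^ 2 := by positivity
    have hL4 : L ^ 2 ≤ 4 := by nlinarith only [hL0, hL2]
    have hρ16 : ρ ^ 2 ≤ 16 := by nlinarith only [hρ1, hρ4]
    have hLρ : (1 + L ^ 2) * ρ ^ 2 ≤ 80 := by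
      nlinarith only [hL4, hρ16, hL0, hρ1, sq_nonneg L, sq_nonneg ρ]
    have h1 : c / 80 ≤ c / ((1 + L ^ 2) * ρ ^ 2) := by
      rw [div_le_div_iff₀ (by norm_num) hden]
      nlinarith only [hLρ, hc0]
    have h2 : a₀ ^ 2 ≤ a ^ 2 := by nlinarith only [hna0, hna1, ha₀pos]
    have h4 : a₀ ^ 2 * (c / 80) ≤ a ^ 2 * (c / ((1 + L ^ 2) * ρ ^ 2)) :=
      mul_le_mul h2 h1 (by positivity) (by positivity)
    rw [hkey, hm]
    exact h4
  -- quadratic form identities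
  set s : ℝ := τ * a / ρ with hs
  set t : ℝ := (τ * (b * ρ - a) / Q) * ρ⁻¹ with ht
  have hquadH : ∀ q : Fin d → ℝ,
      q ⬝ᵥ (hess' (phiTau e c τ) x *ᵥ q)
        = s * (q ⬝ᵥ (A *ᵥ q)) + t * ((u ⬝ᵥ q) * (u ⬝ᵥ q)) := by
    intro q
    have hrow : ∀ i, (∑ j, hess' (phiTau e c τ) x i j * q j)
        = s * (∑ j, A i j * q j) + t * u i * (∑ j, u j * q j) := by
      intro i
      rw [Finset.mul_sum, Finset.mul_sum, ← Finset.sum_add_distrib]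
      refine Finset.sum_congr rfl fun j _ => ?_
      rw [hhess i j]
      ring
    simp only [dotProduct, Matrix.mulVec]
    have hterm : ∀ i, q i * (∑ j, hess' (phiTau e c τ) x i j * q j)
        = s * (q i * ∑ j, A i j * q j) + (t * (∑ j, u j * q j)) * (u i * q i) := by
      intro i; rw [hrow i]; ring
    rw [Finset.sum_congr rfl fun i _ => hterm i, Finset.sum_add_distrib,
      ← Finset.mul_sum, ← Finset.mul_sum]
    ring
  clear_value s t
  have hquadE : ∀ p : Fin k → ℝ,
      p ⬝ᵥ ((E * hess' (phiTau e c τ) x * Eᵀ) *ᵥ p)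
        = (Eᵀ *ᵥ p) ⬝ᵥ (hess' (phiTau e c τ) x *ᵥ (Eᵀ *ᵥ p)) := by
    intro p
    rw [← Matrix.mulVec_mulVec, ← Matrix.mulVec_mulVec, Matrix.dotProduct_mulVec p,
      ← Matrix.mulVec_transpose]
  clear_value E S A
  -- Term 1
  set r : Fin k → ℝ := E *ᵥ u with hr
  have hSu : S *ᵥ u = x := by rw [hu]; exact hSAv x
  have hrr : r ⬝ᵥ r = Q := by
    rw [hr, hmv0, hSu, dotProduct_comm, hxu]
  have hSg : Eᵀ *ᵥ (E *ᵥ grad' (phiTau e c τ) x) = s • x := by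
    rw [Matrix.mulVec_mulVec, ← hSdef, hgrad, Matrix.mulVec_smul, hSu, hs]
  have hX : (E *ᵥ grad' (phiTau e c τ) x) ⬝ᵥ
        ((E * hess' (phiTau e c τ) x * Eᵀ) *ᵥ (E *ᵥ grad' (phiTau e c τ) x))
      = s * (s * s * Q) + t * ((s * Q) * (s * Q)) := by
    have h1 : A *ᵥ (s • x) = s • u := by rw [Matrix.mulVec_smul, ← hu]
    have h2 : (s • x) ⬝ᵥ (s • u) = s * (s * Q) := by
      rw [smul_dotProduct, dotProduct_smul, hxu]
      simp [smul_eq_mul]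
    have h3 : u ⬝ᵥ (s • x) = s * Q := by
      rw [dotProduct_smul, dotProduct_comm u x, hxu]
      simp [smul_eq_mul]
    rw [hquadE, hSg, hquadH, h1, h2, h3]
    ring
  have hsQ : s * (s * s * Q) + t * ((s * Q) * (s * Q)) = τ ^ 3 * a ^ 2 * b := by
    rw [hs, ht, ← hρQ]
    have hρ0 : ρ ≠ 0 := ne_of_gt hρpos
    field_simp
    ring
  -- Term 2
  set z : Fin k → ℝ := E *ᵥ ζ with hz
  set η : Fin k → ℝ := E *ᵥ ξ - z with hη
  have hEξ : E *ᵥ ξ = z + η := by rw [hη]; abel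
  have hsneg : s < 0 := by
    rw [hs]
    apply div_neg_of_neg_of_pos (mul_neg_of_pos_of_neg hτ haneg) hρpos
  have hzr : z ⬝ᵥ r = 0 := by
    have h0 : z ⬝ᵥ (E *ᵥ grad' (phiTau e c τ) x) = 0 := hζorth
    rw [hgrad, Matrix.mulVec_smul, dotProduct_smul, smul_eq_mul] at h0
    rcases mul_eq_zero.mp h0 with h | h
    · exact absurd h (ne_of_lt hsneg)
    · exact h
  -- norm facts
  have hζn2 : z ⬝ᵥ z = τ ^ 2 * a ^ 2 := by
    have h2 : (E *ᵥ grad' (phiTau e c τ) x) = s • r := by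
      rw [hgrad, Matrix.mulVec_smul, hr]
    calc z ⬝ᵥ z = enorm' z ^ 2 := (Stmt1Aux.sq_enorm' z).symm
      _ = enorm' (s • r) ^ 2 := by rw [hζnorm, h2]
      _ = (s • r) ⬝ᵥ (s • r) := Stmt1Aux.sq_enorm' _
      _ = s * (s * Q) := by
          rw [smul_dotProduct, dotProduct_smul, hrr]
          simp [smul_eq_mul]
      _ = τ ^ 2 * a ^ 2 := by
          rw [hs, ← hρQ]
          field_simp
  have ha2 : a ^ 2 ≤ 1 := by
    nlinarith only [mul_nonneg (by linarith only [hna1] : (0:ℝ) ≤ 1 + a)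
      (by linarith only [haneg] : (0:ℝ) ≤ 1 - a)]
  have henz : enorm' z ≤ τ := by
    have h0 : 0 ≤ enorm' z := Real.sqrt_nonneg _
    have h1 : enorm' z ^ 2 = τ ^ 2 * a ^ 2 := by rw [Stmt1Aux.sq_enorm' z, hζn2]
    nlinarith only [h0, h1, hτ, ha2, sq_nonneg (enorm' z - τ), sq_nonneg τ,
      mul_nonneg (sq_nonneg τ) (by linarith only [ha2] : (0:ℝ) ≤ 1 - a ^ 2)]
  have hηnorm : enorm' η ≤ γ₀ * τ := hζclose
  have hη0 : 0 ≤ enorm' η := Real.sqrt_nonneg _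
  have hηη0 : 0 ≤ η ⬝ᵥ η := by
    rw [← Stmt1Aux.sq_enorm' η]
    positivity
  have hηη : η ⬝ᵥ η ≤ (γ₀ * τ) ^ 2 := by
    have h1 := Stmt1Aux.sq_enorm' η
    nlinarith only [h1, hηnorm, hη0]
  have hzη : |z ⬝ᵥ η| ≤ τ * (γ₀ * τ) := by
    have h := Stmt1Aux.abs_dot_le z η
    have h2 := mul_le_mul henz hηnorm hη0 (le_of_lt hτ)
    linarith only [h, h2]
  have htpos : 0 ≤ t := by
    rw [ht]
    have h1 : 0 ≤ b * ρ - a := by nlinarith only [hbpos, hρpos, haneg]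
    have h2 : 0 ≤ τ * (b * ρ - a) / Q := by positivity
    exact mul_nonneg h2 (inv_nonneg.mpr hρpos.le)
  -- Term 2 value
  have hY : (E *ᵥ ξ) ⬝ᵥ ((E * hess' (phiTau e c τ) x * Eᵀ) *ᵥ (E *ᵥ ξ))
      = s * (τ ^ 2 * a ^ 2) + s * (2 * (z ⬝ᵥ η)) + s * (η ⬝ᵥ η)
        + t * ((r ⬝ᵥ η) * (r ⬝ᵥ η)) := by
    rw [hquadE, Matrix.mulVec_mulVec, ← hSdef, hquadH]
    have h1 : (S *ᵥ ξ) ⬝ᵥ (A *ᵥ (S *ᵥ ξ)) = (E *ᵥ ξ) ⬝ᵥ (E *ᵥ ξ) := by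
      rw [hASv ξ, dotProduct_comm, ← hmv0]
    have h2 : u ⬝ᵥ (S *ᵥ ξ) = r ⬝ᵥ (E *ᵥ ξ) := by
      rw [← hmv0 u ξ, ← hr]
    rw [h1, h2, hEξ]
    have h3 : r ⬝ᵥ (z + η) = r ⬝ᵥ η := by
      rw [dotProduct_add,
        show r ⬝ᵥ z = 0 from by rw [dotProduct_comm]; exact hzr]
      ring
    have h4 : (z + η) ⬝ᵥ (z + η) = τ ^ 2 * a ^ 2 + 2 * (z ⬝ᵥ η) + η ⬝ᵥ η := by
      rw [dotProduct_add, add_dotProduct, add_dotProduct, hζn2,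
        dotProduct_comm η z]
      ring
    rw [h3, h4]
    ring
  -- final assembly
  have hmain2 : m * τ ^ 3 ≤ τ ^ 3 * a ^ 2 * b + s * (τ ^ 2 * a ^ 2) := by
    have he : τ ^ 3 * a ^ 2 * b + s * (τ ^ 2 * a ^ 2) = τ ^ 3 * (a ^ 2 * (b + a / ρ)) := by
      rw [hs]
      field_simp
    rw [he]
    have h := mul_le_mul_of_nonneg_left hmain (le_of_lt (pow_pos hτ 3))
    linarith only [h]
  have hsge : -τ ≤ s := by
    rw [hs, le_div_iff₀ hρpos]
    nlinarith only [mul_nonneg hτ.le (by linarith only [hna1] : (0:ℝ) ≤ 1 + a),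
      mul_nonneg hτ.le (by linarith only [hρ1] : (0:ℝ) ≤ ρ - 1)]
  have e1 : -(2 * γ₀ * τ ^ 3) ≤ s * (2 * (z ⬝ᵥ η)) := by
    have habs := abs_le.mp hzη
    nlinarith only [mul_nonneg (by linarith only [hsge] : (0:ℝ) ≤ τ + s)
        (by linarith only [habs.1] : (0:ℝ) ≤ τ * (γ₀ * τ) + z ⬝ᵥ η),
      mul_nonneg (by linarith only [hsneg] : (0:ℝ) ≤ -s)
        (by linarith only [habs.2] : (0:ℝ) ≤ τ * (γ₀ * τ) - z ⬝ᵥ η),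
      mul_nonneg hτ.le (by linarith only [habs.2] : (0:ℝ) ≤ τ * (γ₀ * τ) - z ⬝ᵥ η)]
  have e2 : -(γ₀ * τ ^ 3) ≤ s * (η ⬝ᵥ η) := by
    nlinarith only [mul_nonneg (by linarith only [hsge] : (0:ℝ) ≤ τ + s) hηη0,
      mul_nonneg hτ.le (by linarith only [hηη] : (0:ℝ) ≤ (γ₀ * τ) ^ 2 - η ⬝ᵥ η),
      mul_nonneg (mul_nonneg hγ₀pos.le (by linarith only [hγ₀1] : (0:ℝ) ≤ 1 - γ₀))
        (pow_nonneg hτ.le 3)]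
  have e3 : 0 ≤ t * ((r ⬝ᵥ η) * (r ⬝ᵥ η)) := mul_nonneg htpos (mul_self_nonneg _)
  have e4 : 3 * γ₀ * τ ^ 3 ≤ m / 2 * τ ^ 3 := by
    have h := mul_le_mul_of_nonneg_right hγ₀m (le_of_lt (pow_pos hτ 3))
    nlinarith only [h]
  rw [ge_iff_le, hX, hY, hsQ]
  linarith only [hmain2, e1, e2, e3, e4]
end
end

section
/- For every c ∈ (0, 2/π) and every t ∈ [1,4], the function φ(t) := −log t + c(log t · arctan(log t) − (1/2)log(1+(log t)²)) satisfies (φ''(t) + φ'(t)/t)·φ'(t)² = c(1 − c·arctan(log t))² / (t⁴(1 + (log t)²)), and this quantity is at least c(1 − cπ/2)² / (256(1 + 4(log 2)²)). -/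
open Real

noncomputable section

lemma phi_hasDeriv (c : ℝ) {x : ℝ} (hx : 0 < x) :
    HasDerivAt (phiFun c) ((c * Real.arctan (Real.log x) - 1) / x) x := by
  have hx0 : x ≠ 0 := hx.ne'
  have hlog : HasDerivAt Real.log (1 / x) x := by
    simpa [one_div] using Real.hasDerivAt_log hx0
  have harc : HasDerivAt (fun y => Real.arctan (Real.log y))
      (1 / (1 + Real.log x ^ 2) * (1 / x)) x := by
    have := (Real.hasDerivAt_arctan (Real.log x)).comp x hlog
    simpa [add_comm, Function.comp_def] using this
  have hmul : HasDerivAt (fun y => Real.log y * Real.arctan (Real.log y))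
      (1 / x * Real.arctan (Real.log x) + Real.log x * (1 / (1 + Real.log x ^ 2) * (1 / x))) x :=
    hlog.mul harc
  have hsq : HasDerivAt (fun y => 1 + Real.log y ^ 2) (2 * Real.log x * (1 / x)) x := by
    have := (hlog.pow 2).const_add 1
    simpa [mul_comm, mul_assoc] using this
  have hpos : 0 < 1 + Real.log x ^ 2 := by positivity
  have hlog2 : HasDerivAt (fun y => Real.log (1 + Real.log y ^ 2))
      (2 * Real.log x * (1 / x) / (1 + Real.log x ^ 2)) x := hsq.log hpos.ne'
  have h : HasDerivAt (phiFun c)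
      (-(1 / x) + c * ((1 / x * Real.arctan (Real.log x)
        + Real.log x * (1 / (1 + Real.log x ^ 2) * (1 / x)))
        - 1 / 2 * (2 * Real.log x * (1 / x) / (1 + Real.log x ^ 2)))) x :=
    (hlog.neg).add ((hmul.sub (hlog2.const_mul (1 / 2))).const_mul c)
  convert h using 1
  field_simp
  ring

lemma phi_deriv_eq (c : ℝ) {x : ℝ} (hx : 0 < x) :
    deriv (phiFun c) x = (c * Real.arctan (Real.log x) - 1) / x :=
  (phi_hasDeriv c hx).deriv

lemma phi_deriv2 (c : ℝ) {x : ℝ} (hx : 0 < x) :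
    deriv (deriv (phiFun c)) x
      = (c / (1 + Real.log x ^ 2) - c * Real.arctan (Real.log x) + 1) / x ^ 2 := by
  have hx0 : x ≠ 0 := hx.ne'
  have hev : deriv (phiFun c) =ᶠ[nhds x]
      fun y => (c * Real.arctan (Real.log y) - 1) / y := by
    filter_upwards [Ioi_mem_nhds hx] with y hy
    exact phi_deriv_eq c hy
  rw [hev.deriv_eq]
  have hlog : HasDerivAt Real.log (1 / x) x := by
    simpa [one_div] using Real.hasDerivAt_log hx0
  have harc : HasDerivAt (fun y => Real.arctan (Real.log y))
      (1 / (1 + Real.log x ^ 2) * (1 / x)) x := by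
    have := (Real.hasDerivAt_arctan (Real.log x)).comp x hlog
    simpa [add_comm, Function.comp_def] using this
  have hnum : HasDerivAt (fun y => c * Real.arctan (Real.log y) - 1)
      (c * (1 / (1 + Real.log x ^ 2) * (1 / x))) x := (harc.const_mul c).sub_const 1
  have hid : HasDerivAt (fun y : ℝ => y) 1 x := hasDerivAt_id x
  have h := hnum.div hid hx0
  rw [show deriv (fun y => (c * Real.arctan (Real.log y) - 1) / y) x = _ from h.deriv]
  have hpos : 0 < 1 + Real.log x ^ 2 := by positivity
  field_simp
  ring

/-- for `c ∈ (0, 2/π)` and `t ∈ [1,4]`,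
`(φ''(t) + φ'(t)/t)·φ'(t)² = c(1 − c·arctan(log t))²/(t⁴(1+log²t))`, and this quantity is
at least `c(1 − cπ/2)²/(256(1+4 log²2))`. -/
theorem stmt2 (c : ℝ) (hc0 : 0 < c) (hc1 : c < 2 / Real.pi)
    (t : ℝ) (ht : t ∈ Set.Icc (1 : ℝ) 4) :
    (deriv (deriv (phiFun c)) t + deriv (phiFun c) t / t) * deriv (phiFun c) t ^ 2
        = c * (1 - c * Real.arctan (Real.log t)) ^ 2 / (t ^ 4 * (1 + Real.log t ^ 2)) ∧
      c * (1 - c * Real.arctan (Real.log t)) ^ 2 / (t ^ 4 * (1 + Real.log t ^ 2))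
        ≥ c * (1 - c * Real.pi / 2) ^ 2 / (256 * (1 + 4 * Real.log 2 ^ 2)) := by
  obtain ⟨ht1, ht4⟩ := ht
  have ht0 : (0 : ℝ) < t := lt_of_lt_of_le one_pos ht1
  have ht0' : t ≠ 0 := ht0.ne'
  have hL0 : 0 ≤ Real.log t := Real.log_nonneg ht1
  have hpos : 0 < 1 + Real.log t ^ 2 := by positivity
  set A := Real.arctan (Real.log t) with hA
  constructor
  · rw [phi_deriv2 c ht0, phi_deriv_eq c ht0]
    field_simp
    ring
  · -- inequality
    have hA0 : 0 ≤ A := by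
      rw [hA, ← Real.arctan_zero]
      exact Real.arctan_strictMono.monotone hL0
    have hApi : A ≤ Real.pi / 2 := (Real.arctan_lt_pi_div_two _).le
    have hcpi : c * Real.pi / 2 < 1 := by
      have hpi : 0 < Real.pi := Real.pi_pos
      have := (lt_div_iff₀ hpi).mp hc1
      linarith
    have h1 : 0 ≤ 1 - c * Real.pi / 2 := by linarith
    have h2 : 1 - c * Real.pi / 2 ≤ 1 - c * A := by nlinarith
    have hnum : c * (1 - c * Real.pi / 2) ^ 2 ≤ c * (1 - c * A) ^ 2 := by
      have := pow_le_pow_left₀ h1 h2 2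
      nlinarith
    have hLle : Real.log t ≤ 2 * Real.log 2 := by
      calc Real.log t ≤ Real.log 4 := Real.log_le_log ht0 ht4
        _ = 2 * Real.log 2 := by
          rw [show (4 : ℝ) = 2 ^ 2 by norm_num, Real.log_pow]; push_cast; ring
    have hden : t ^ 4 * (1 + Real.log t ^ 2) ≤ 256 * (1 + 4 * Real.log 2 ^ 2) := by
      have ht4' : t ^ 4 ≤ 256 := by
        calc t ^ 4 ≤ 4 ^ 4 := pow_le_pow_left₀ ht0.le ht4 4
          _ = 256 := by norm_num
      have hL2 : Real.log t ^ 2 ≤ 4 * Real.log 2 ^ 2 := by nlinarith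
      nlinarith [pow_pos ht0 4]
    have hdpos : 0 < t ^ 4 * (1 + Real.log t ^ 2) := by positivity
    exact div_le_div₀ (by positivity) hnum hdpos hden
end
end

section
/- There exist κ > 0, C_HF > 0 and δ₀, h₀ ∈ (0,1) such that for all h ∈ (0,h₀), all τ ≥ 1 with hτ ≤ δ₀, every x̄ ∈ ℝ^d with 1/2 ≤ |x̄|_Γ ≤ 2, and every ξ ∈ [0, h⁻¹]^d with |ξ|_E ≥ κτ: p_s(ξ)² ≥ C_HF (|ξ|_E⁴ + τ²|ξ|_E² + τ⁴). -/
open Matrix Real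
open scoped BigOperators

noncomputable section

/-- `|ξ|_E := ‖Eξ‖₂`. -/
def eNormE {d k : ℕ} (e : Fin k → Fin d → ℝ) (ξ : Fin d → ℝ) : ℝ :=
  enorm' (rowMat e *ᵥ ξ)

/-- `ξ_j := 2π⟨ξ, e_j⟩`. -/
def xiC {d k : ℕ} (e : Fin k → Fin d → ℝ) (ξ : Fin d → ℝ) (j : Fin k) : ℝ :=
  2 * Real.pi * (ξ ⬝ᵥ e j)

/-- The symmetric symbol `p_s`. -/
def pSym {d k : ℕ} (e : Fin k → Fin d → ℝ) (c τ h : ℝ) (xbar ξ : Fin d → ℝ) : ℝ :=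
  ∑ j, (2 * h⁻¹ ^ 2 * (Real.cos (h * xiC e ξ j) - 1)
    + (grad' (phiTau e c τ) xbar ⬝ᵥ e j) ^ 2 * Real.cos (h * xiC e ξ j))

/-- The antisymmetric symbol `p_a`. -/
def pAnt {d k : ℕ} (e : Fin k → Fin d → ℝ) (c τ h : ℝ) (xbar ξ : Fin d → ℝ) : ℝ :=
  ∑ j, 2 * h⁻¹ * (grad' (phiTau e c τ) xbar ⬝ᵥ e j) * Real.sin (h * xiC e ξ j)

/-- The commutator symbol `q`. -/
def qSym {d k : ℕ} (e : Fin k → Fin d → ℝ) (c τ h : ℝ) (xbar ξ : Fin d → ℝ) : ℝ :=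
  4 * τ * h⁻¹ ^ 2 * ∑ i, ∑ j, Real.sin (h * xiC e ξ i) * Real.sin (h * xiC e ξ j)
      * (e i ⬝ᵥ (hess' (phiTau e c τ) xbar *ᵥ e j))
  + τ * ∑ i, ∑ j, (e i ⬝ᵥ (hess' (phiTau e c τ) xbar *ᵥ e j))
      * ∑ η ∈ ({-1, 1} : Finset ℤ), (η : ℝ)
          * (grad' (phiTau e c τ) xbar ⬝ᵥ (e i + (η : ℝ) • e j)) ^ 2
          * Real.cos (h * xiC e ξ i - (η : ℝ) * (h * xiC e ξ j))


/-! ### Auxiliary lemmas -/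

lemma aux_contDiff_quad {d : ℕ} (Q : Matrix (Fin d) (Fin d) ℝ) :
    ContDiff ℝ 1 (fun x : Fin d → ℝ => x ⬝ᵥ (Q *ᵥ x)) := by
  simp only [dotProduct, Matrix.mulVec]
  apply ContDiff.sum
  intro i _
  exact (contDiff_apply ℝ ℝ i).mul
    (ContDiff.sum fun j _ => contDiff_const.mul (contDiff_apply ℝ ℝ j))

lemma aux_F_contDiffAt {d : ℕ} (Q : Matrix (Fin d) (Fin d) ℝ) (c : ℝ) {x : Fin d → ℝ}
    (hx : 0 < x ⬝ᵥ (Q *ᵥ x)) :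
    ContDiffAt ℝ 1 (fun y => phiFun c (Real.sqrt (y ⬝ᵥ (Q *ᵥ y)))) x := by
  have hg : ContDiffAt ℝ 1 (fun y : Fin d → ℝ => Real.sqrt (y ⬝ᵥ (Q *ᵥ y))) x :=
    (Real.contDiffAt_sqrt hx.ne').comp x (aux_contDiff_quad Q).contDiffAt
  have gpos : 0 < Real.sqrt (x ⬝ᵥ (Q *ᵥ x)) := Real.sqrt_pos.mpr hx
  have hlog : ContDiffAt ℝ 1 (fun y : Fin d → ℝ =>
      Real.log (Real.sqrt (y ⬝ᵥ (Q *ᵥ y)))) x := hg.log gpos.ne'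
  unfold phiFun
  exact (hlog.neg).add (contDiffAt_const.mul ((hlog.mul
    ((Real.contDiff_arctan.contDiffAt).comp x hlog)).sub (contDiffAt_const.mul
    ((contDiffAt_const.add (hlog.pow 2)).log (by positivity)))))

lemma aux_grad_dot {d : ℕ} (ψ : (Fin d → ℝ) → ℝ) (x v : Fin d → ℝ) :
    grad' ψ x ⬝ᵥ v = fderiv ℝ ψ x v := by
  unfold grad'
  have hv : v = ∑ i, v i • (Pi.single i (1:ℝ) : Fin d → ℝ) := by
    funext j
    simp [Finset.sum_apply, Pi.single_apply, mul_comm]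
  conv_rhs => rw [hv]
  rw [map_sum]
  simp [dotProduct, mul_comm]

lemma aux_posdef {d k : ℕ} (e : Fin k → Fin d → ℝ)
    (hspan : Submodule.span ℝ (Set.range e) = ⊤) :
    ((rowMat e)ᵀ * rowMat e).PosDef := by
  refine Matrix.PosDef.of_dotProduct_mulVec_pos
    (by simpa using Matrix.isHermitian_conjTranspose_mul_self (rowMat e)) fun x hx => ?_
  have hx' : rowMat e *ᵥ x ≠ 0 := by
    intro h0
    apply hx
    have hfun : ∀ j, e j ⬝ᵥ x = 0 := fun j => congrFun h0 j
    let f : (Fin d → ℝ) →ₗ[ℝ] ℝ :=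
      { toFun := fun y => y ⬝ᵥ x
        map_add' := fun a b => add_dotProduct a b x
        map_smul' := fun r a => smul_dotProduct r a x }
    have hker : Submodule.span ℝ (Set.range e) ≤ LinearMap.ker f := by
      rw [Submodule.span_le]
      rintro y ⟨j, rfl⟩
      exact hfun j
    rw [hspan] at hker
    have hx0 : x ⬝ᵥ x = 0 := hker (Submodule.mem_top)
    exact dotProduct_self_eq_zero.mp hx0
  have key : star x ⬝ᵥ (((rowMat e)ᵀ * rowMat e) *ᵥ x)
      = (rowMat e *ᵥ x) ⬝ᵥ (rowMat e *ᵥ x) := by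
    rw [← Matrix.mulVec_mulVec, Matrix.dotProduct_mulVec, Matrix.vecMul_transpose]
    simp
  rw [key]
  rcases (dotProduct_self_eq_zero (v := rowMat e *ᵥ x)).ne.mpr hx' |>.lt_or_gt with h | h
  · exact absurd h (not_lt.mpr (Finset.sum_nonneg fun i _ => mul_self_nonneg _))
  · exact h

lemma aux_coercive {d : ℕ} (hd : 1 ≤ d) (Q : Matrix (Fin d) (Fin d) ℝ) (hQ : Q.PosDef) :
    ∃ m > (0:ℝ), ∀ x : Fin d → ℝ, m * ‖x‖^2 ≤ x ⬝ᵥ (Q *ᵥ x) := by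
  haveI : Nonempty (Fin d) := ⟨⟨0, hd⟩⟩
  have hqc : Continuous (fun x : Fin d → ℝ => x ⬝ᵥ (Q *ᵥ x)) := (aux_contDiff_quad Q).continuous
  have hsne : (Metric.sphere (0 : Fin d → ℝ) 1).Nonempty :=
    NormedSpace.sphere_nonempty.mpr zero_le_one
  obtain ⟨x₀, hx₀S, hmin'⟩ := (isCompact_sphere (0 : Fin d → ℝ) 1).exists_isMinOn hsne
    hqc.continuousOn
  have hx₀ne : x₀ ≠ 0 := by
    intro h
    rw [h] at hx₀S
    simp at hx₀S
  have hm : 0 < x₀ ⬝ᵥ (Q *ᵥ x₀) := by simpa using hQ.dotProduct_mulVec_pos hx₀ne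
  refine ⟨_, hm, fun x => ?_⟩
  rcases eq_or_ne x 0 with rfl | hxne
  · simp
  · have hnx : (0:ℝ) < ‖x‖ := norm_pos_iff.mpr hxne
    set u := ‖x‖⁻¹ • x with hu
    have huS : u ∈ Metric.sphere (0 : Fin d → ℝ) 1 := by
      simp [hu, norm_smul, abs_of_pos (inv_pos.mpr hnx), inv_mul_cancel₀ hnx.ne']
    have hqu : u ⬝ᵥ (Q *ᵥ u) = ‖x‖⁻¹^2 * (x ⬝ᵥ (Q *ᵥ x)) := by
      simp [hu, Matrix.mulVec_smul, smul_dotProduct, dotProduct_smul,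
        smul_eq_mul]
      ring
    have hle : x₀ ⬝ᵥ (Q *ᵥ x₀) ≤ ‖x‖⁻¹^2 * (x ⬝ᵥ (Q *ᵥ x)) := hqu ▸ hmin' huS
    have h2 : x₀ ⬝ᵥ (Q *ᵥ x₀) * ‖x‖^2 ≤ ‖x‖⁻¹^2 * (x ⬝ᵥ (Q *ᵥ x)) * ‖x‖^2 :=
      mul_le_mul_of_nonneg_right hle (by positivity)
    calc x₀ ⬝ᵥ (Q *ᵥ x₀) * ‖x‖ ^ 2 ≤ _ := h2
      _ = x ⬝ᵥ (Q *ᵥ x) := by field_simp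

set_option maxHeartbeats 1000000 in
/-- high-frequency lower bound for the symmetric symbol:
for `|ξ|_E ≥ κτ`, `p_s(ξ)² ≥ C_HF(|ξ|_E⁴ + τ²|ξ|_E² + τ⁴)`. -/
theorem stmt9 (d k : ℕ) (hd : 1 ≤ d) (hdk : d ≤ k)
    (e : Fin k → Fin d → ℝ) (hspan : Submodule.span ℝ (Set.range e) = ⊤)
    (hnorm : ∀ j, enorm' (e j) < 1 / (4 * Real.sqrt d))
    (c : ℝ) (hc0 : 0 < c) (hc1 : c < 2 / Real.pi) :
    ∃ κ > (0 : ℝ), ∃ CHF > (0 : ℝ), ∃ δ₀ ∈ Set.Ioo (0 : ℝ) 1, ∃ h₀ ∈ Set.Ioo (0 : ℝ) 1,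
      ∀ h ∈ Set.Ioo (0 : ℝ) h₀, ∀ τ : ℝ, 1 ≤ τ → h * τ ≤ δ₀ →
        ∀ xbar : Fin d → ℝ, 1/2 ≤ gNorm e xbar → gNorm e xbar ≤ 2 →
          ∀ ξ : Fin d → ℝ, (∀ i, ξ i ∈ Set.Icc (0 : ℝ) h⁻¹) →
            eNormE e ξ ≥ κ * τ →
            pSym e c τ h xbar ξ ^ 2
              ≥ CHF * (eNormE e ξ ^ 4 + τ ^ 2 * eNormE e ξ ^ 2 + τ ^ 4) := by
  classical
  set Q := ((rowMat e)ᵀ * rowMat e)⁻¹ with hQdef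
  have hPD : Q.PosDef := (aux_posdef e hspan).inv
  obtain ⟨m, hm, hcoer⟩ := aux_coercive hd Q hPD
  have hqc : Continuous (fun x : Fin d → ℝ => x ⬝ᵥ (Q *ᵥ x)) := (aux_contDiff_quad Q).continuous
  set F : (Fin d → ℝ) → ℝ := fun x => phiFun c (Real.sqrt (x ⬝ᵥ (Q *ᵥ x))) with hFdef
  set U : Set (Fin d → ℝ) := {x | 0 < x ⬝ᵥ (Q *ᵥ x)} with hUdef
  have hUopen : IsOpen U := isOpen_lt continuous_const hqc
  set K : Set (Fin d → ℝ) := (fun x => x ⬝ᵥ (Q *ᵥ x)) ⁻¹' (Set.Icc (1/4) 4) with hKdef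
  have hKU : K ⊆ U := fun x hx => lt_of_lt_of_le (by norm_num) hx.1
  have hKc : IsCompact K := by
    apply IsCompact.of_isClosed_subset
      (isCompact_closedBall (0 : Fin d → ℝ) (Real.sqrt (4/m)))
      (isClosed_Icc.preimage hqc)
    intro x hx
    rw [Metric.mem_closedBall, dist_zero_right]
    have h1 : m * ‖x‖^2 ≤ 4 := le_trans (hcoer x) hx.2
    have h2 : ‖x‖^2 ≤ 4/m := by
      rw [le_div_iff₀ hm]; linarith [mul_comm m (‖x‖^2)]
    exact Real.le_sqrt_of_sq_le h2
  have hFU : ContDiffOn ℝ 1 F U := fun x hx => (aux_F_contDiffAt Q c hx).contDiffWithinAt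
  have hfc : ContinuousOn (fderiv ℝ F) K :=
    (hFU.continuousOn_fderiv_of_isOpen hUopen le_rfl).mono hKU
  obtain ⟨M, hM⟩ := hKc.exists_bound_of_continuousOn hfc
  set M' : ℝ := max M 1 with hM'def
  have hM'1 : (1:ℝ) ≤ M' := le_max_right _ _
  set A₀ : ℝ := k * M' ^ 2 with hA₀def
  have hk1 : (1:ℝ) ≤ (k:ℝ) := by exact_mod_cast hd.trans hdk
  have hA₀1 : (1:ℝ) ≤ A₀ := by nlinarith
  have hA₀0 : (0:ℝ) ≤ A₀ := by linarith
  refine ⟨max 1 (Real.sqrt A₀), lt_of_lt_of_le one_pos (le_max_left _ _), 75, by norm_num,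
    1/2, ⟨by norm_num, by norm_num⟩, 1/2, ⟨by norm_num, by norm_num⟩, ?_⟩
  intro h hh τ hτ1 _ xbar hx1 hx2 ξ hξbox hξE
  have hh0 : 0 < h := hh.1
  have hτ0 : 0 < τ := lt_of_lt_of_le one_pos hτ1
  -- xbar lies in K
  have hgx : gNorm e xbar = Real.sqrt (xbar ⬝ᵥ (Q *ᵥ xbar)) := rfl
  have hq1 : 1/4 ≤ xbar ⬝ᵥ (Q *ᵥ xbar) := by
    have h1 := (Real.le_sqrt' (by norm_num : (0:ℝ) < 1/2)).mp (hgx ▸ hx1)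
    nlinarith
  have hq0 : (0:ℝ) ≤ xbar ⬝ᵥ (Q *ᵥ xbar) := by linarith
  have hq4 : xbar ⬝ᵥ (Q *ᵥ xbar) ≤ 4 := by
    have h2 : Real.sqrt (xbar ⬝ᵥ (Q *ᵥ xbar)) ≤ 2 := hgx ▸ hx2
    nlinarith [Real.sq_sqrt hq0, Real.sqrt_nonneg (xbar ⬝ᵥ (Q *ᵥ xbar))]
  have hxK : xbar ∈ K := ⟨hq1, hq4⟩
  have hxU : xbar ∈ U := hKU hxK
  have hdF : DifferentiableAt ℝ F xbar :=
    (hFU.contDiffAt (hUopen.mem_nhds hxU)).differentiableAt one_ne_zero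
  -- bound on the gradient coefficients
  have hgrad : ∀ j, grad' (phiTau e c τ) xbar ⬝ᵥ e j = τ * (fderiv ℝ F xbar (e j)) := by
    intro j
    rw [aux_grad_dot]
    have hps : phiTau e c τ = fun x => τ * F x := rfl
    rw [hps, fderiv_const_mul hdF τ]
    simp
  have hab : ∀ j, (grad' (phiTau e c τ) xbar ⬝ᵥ e j) ^ 2 ≤ M' ^ 2 * τ ^ 2 := by
    intro j
    rw [hgrad j]
    have hej : ‖e j‖ ≤ 1 := by
      rw [pi_norm_le_iff_of_nonneg zero_le_one]
      intro i
      have h1 : |e j i| ≤ enorm' (e j) := by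
        rw [← Real.sqrt_sq_eq_abs]
        exact Real.sqrt_le_sqrt (Finset.single_le_sum (f := fun i => e j i ^ 2)
          (fun _ _ => sq_nonneg _) (Finset.mem_univ i))
      have hd1 : (1:ℝ) ≤ Real.sqrt d := Real.one_le_sqrt.mpr (by exact_mod_cast hd)
      have h3 := hnorm j
      have h4 : enorm' (e j) ≤ 1 := by
        have h5 : (1:ℝ)/(4 * Real.sqrt d) ≤ 1 := by
          rw [div_le_one (by positivity)]; linarith
        linarith
      simpa using h1.trans h4
    have hDF : |fderiv ℝ F xbar (e j)| ≤ M' := by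
      calc |fderiv ℝ F xbar (e j)| = ‖fderiv ℝ F xbar (e j)‖ := (Real.norm_eq_abs _).symm
        _ ≤ ‖fderiv ℝ F xbar‖ * ‖e j‖ := (fderiv ℝ F xbar).le_opNorm (e j)
        _ ≤ M' * 1 := mul_le_mul ((hM xbar hxK).trans (le_max_left _ _)) hej (norm_nonneg _)
            (le_trans (norm_nonneg _) ((hM xbar hxK).trans (le_max_left _ _)))
        _ = M' := mul_one _
    have h6 : (fderiv ℝ F xbar (e j))^2 ≤ M'^2 := by
      rw [← sq_abs]
      exact pow_le_pow_left₀ (abs_nonneg _) hDF 2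
    nlinarith [h6, sq_nonneg τ, sq_nonneg (fderiv ℝ F xbar (e j))]
  -- the quantity S = |ξ|_E²
  set S : ℝ := ∑ j, (ξ ⬝ᵥ e j) ^ 2 with hSdef
  have hS0 : 0 ≤ S := Finset.sum_nonneg fun _ _ => sq_nonneg _
  have hge : eNormE e ξ = Real.sqrt S := by
    unfold eNormE enorm'
    congr 1
    apply Finset.sum_congr rfl
    intro j _
    congr 1
    simp [Matrix.mulVec, rowMat, dotProduct, mul_comm]
  -- key pointwise estimate
  have hkey : ∀ j, 2 * h⁻¹ ^ 2 * (Real.cos (h * xiC e ξ j) - 1)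
      + (grad' (phiTau e c τ) xbar ⬝ᵥ e j) ^ 2 * Real.cos (h * xiC e ξ j)
      ≤ -(16 * (ξ ⬝ᵥ e j)^2) + M'^2 * τ^2 := by
    intro j
    have hθeq : h * xiC e ξ j = h * (2 * π * (ξ ⬝ᵥ e j)) := rfl
    have hXb : |ξ ⬝ᵥ e j| ≤ h⁻¹ / 4 := by
      have hCS : ∑ i, |e j i| ≤ Real.sqrt d * enorm' (e j) := by
        have h1 : (∑ i, |e j i|) ^ 2 ≤ (∑ i, e j i ^ 2) * d := by
          have h2 := Finset.sum_mul_sq_le_sq_mul_sq Finset.univ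
            (fun i => |e j i|) (fun _ => (1:ℝ))
          simpa [sq_abs] using h2
        have h2 : (∑ i, |e j i|) ≤ Real.sqrt ((∑ i, e j i ^ 2) * d) :=
          Real.le_sqrt_of_sq_le h1
        rw [Real.sqrt_mul (Finset.sum_nonneg fun _ _ => sq_nonneg _), mul_comm] at h2
        exact h2
      have hdpos : (0:ℝ) < Real.sqrt d :=
        lt_of_lt_of_le one_pos (Real.one_le_sqrt.mpr (by exact_mod_cast hd))
      have h3 := hnorm j
      have hCS2 : ∑ i, |e j i| ≤ 1/4 := by
        calc ∑ i, |e j i| ≤ Real.sqrt d * enorm' (e j) := hCS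
          _ ≤ Real.sqrt d * (1 / (4 * Real.sqrt d)) :=
              mul_le_mul_of_nonneg_left h3.le (Real.sqrt_nonneg _)
          _ = 1/4 := by field_simp
      calc |ξ ⬝ᵥ e j| = |∑ i, ξ i * e j i| := rfl
        _ ≤ ∑ i, |ξ i * e j i| := Finset.abs_sum_le_sum_abs _ _
        _ ≤ ∑ i, h⁻¹ * |e j i| := by
            apply Finset.sum_le_sum
            intro i _
            rw [abs_mul]
            exact mul_le_mul_of_nonneg_right
              (by rw [abs_of_nonneg (hξbox i).1]; exact (hξbox i).2) (abs_nonneg _)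
        _ = h⁻¹ * ∑ i, |e j i| := (Finset.mul_sum _ _ _).symm
        _ ≤ h⁻¹ * (1/4) := mul_le_mul_of_nonneg_left hCS2 (by positivity)
        _ = h⁻¹/4 := by ring
    have hθabs : |h * xiC e ξ j| ≤ π := by
      have h1 : |h * xiC e ξ j| = 2 * π * (h * |ξ ⬝ᵥ e j|) := by
        rw [hθeq, abs_mul, abs_mul, abs_mul, abs_of_pos hh0, abs_of_pos Real.pi_pos]
        norm_num
        ring
      have h2 : h * |ξ ⬝ᵥ e j| ≤ 1/4 := by
        calc h * |ξ ⬝ᵥ e j| ≤ h * (h⁻¹/4) := mul_le_mul_of_nonneg_left hXb hh0.le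
          _ = 1/4 := by field_simp
      rw [h1]
      nlinarith [Real.pi_pos]
    have hcos := Real.cos_le_one_sub_mul_cos_sq hθabs
    have hp1 : 2 * h⁻¹ ^ 2 * (Real.cos (h * xiC e ξ j) - 1) ≤ -(16 * (ξ ⬝ᵥ e j)^2) := by
      have e1 : 2 * h⁻¹ ^ 2 * (-(2/π^2) * (h * (2 * π * (ξ ⬝ᵥ e j)))^2)
          = -(16 * (ξ ⬝ᵥ e j)^2) := by
        field_simp
        ring
      calc 2 * h⁻¹ ^ 2 * (Real.cos (h * xiC e ξ j) - 1)
          ≤ 2 * h⁻¹ ^ 2 * (-(2/π^2) * (h * xiC e ξ j)^2) := by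
            apply mul_le_mul_of_nonneg_left _ (by positivity)
            nlinarith [hcos]
        _ = -(16 * (ξ ⬝ᵥ e j)^2) := by rw [hθeq]; exact e1
    have hp2 : (grad' (phiTau e c τ) xbar ⬝ᵥ e j) ^ 2 * Real.cos (h * xiC e ξ j)
        ≤ M'^2 * τ^2 :=
      le_trans (mul_le_of_le_one_right (sq_nonneg _) (Real.cos_le_one _)) (hab j)
    linarith
  -- summation
  have hsum : pSym e c τ h xbar ξ ≤ -(16 * S) + A₀ * τ^2 := by
    unfold pSym
    calc (∑ j, (2 * h⁻¹ ^ 2 * (Real.cos (h * xiC e ξ j) - 1)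
        + (grad' (phiTau e c τ) xbar ⬝ᵥ e j) ^ 2 * Real.cos (h * xiC e ξ j)))
        ≤ ∑ j, (-(16 * (ξ ⬝ᵥ e j)^2) + M'^2 * τ^2) := Finset.sum_le_sum fun j _ => hkey j
      _ = -(16 * S) + A₀ * τ^2 := by
          rw [Finset.sum_add_distrib, Finset.sum_const, Finset.card_univ, Fintype.card_fin]
          have hneg : ∑ j, -(16 * (ξ ⬝ᵥ e j)^2) = -(16 * S) := by
            rw [hSdef, Finset.mul_sum, ← Finset.sum_neg_distrib]
          rw [hneg, hA₀def]
          push_cast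
          ring
  -- relations between τ and S
  have hκτ : max 1 (Real.sqrt A₀) * τ ≤ Real.sqrt S := by rw [hge] at hξE; exact hξE
  have hτS : τ ≤ Real.sqrt S := by
    have := mul_le_mul_of_nonneg_right (le_max_left 1 (Real.sqrt A₀)) hτ0.le
    simpa using this.trans hκτ
  have hτ2S : τ^2 ≤ S := by
    nlinarith [Real.mul_self_sqrt hS0, Real.sqrt_nonneg S]
  have hAτS : A₀ * τ^2 ≤ S := by
    have h1 : Real.sqrt A₀ * τ ≤ Real.sqrt S :=
      le_trans (mul_le_mul_of_nonneg_right (le_max_right _ _) hτ0.le) hκτ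
    have h2 := mul_le_mul h1 h1 (mul_nonneg (Real.sqrt_nonneg _) hτ0.le) (Real.sqrt_nonneg _)
    nlinarith [Real.mul_self_sqrt hS0, Real.mul_self_sqrt hA₀0]
  have hfinal : pSym e c τ h xbar ξ ≤ -(15 * S) := by linarith
  have hlhs : (15*S)^2 ≤ pSym e c τ h xbar ξ ^ 2 := by nlinarith [hS0]
  have h2S : eNormE e ξ ^ 2 = S := by rw [hge]; exact Real.sq_sqrt hS0
  have h4S : eNormE e ξ ^ 4 = S^2 := by
    rw [show (4:ℕ) = 2*2 from rfl, pow_mul, h2S]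
  rw [ge_iff_le, h2S, h4S]
  have hτ4 : τ^4 ≤ S^2 := by nlinarith [hτ2S, sq_nonneg τ]
  have hmid : τ^2 * S ≤ S^2 := by nlinarith [hτ2S, hS0]
  calc 75 * (S^2 + τ^2 * S + τ^4) ≤ 75 * (3 * S^2) := by linarith
    _ = (15*S)^2 := by ring
    _ ≤ pSym e c τ h xbar ξ ^ 2 := hlhs
end
end

section
/- Let c₁, c₂ > 0, C ≥ 1, τ₀ > 1, δ₀ ∈ (0,1) and h > 0 with τ₀ < δ₀/(2h), and set α := c₂/(c₁+c₂). Suppose A, B, M are real numbers with 0 ≤ B ≤ A ≤ M and A ≤ C(e^{c₁τ}B + e^{−c₂τ}M) for every τ ∈ (τ₀, δ₀h⁻¹). Then A ≤ D(B^α·M^{1−α} + e^{−c₂δ₀/(2h)}·M), where D := max(2C, e^{(c₁+c₂)ατ₀}). -/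
open Real

/-- abstract interpolation step.  If `0 ≤ B ≤ A ≤ M` and
`A ≤ C(e^{c₁τ}B + e^{−c₂τ}M)` for every `τ ∈ (τ₀, δ₀/h)`, with `τ₀ < δ₀/(2h)`, then, with
`α = c₂/(c₁+c₂)` and `D = max(2C, e^{(c₁+c₂)ατ₀})`,
`A ≤ D(B^α M^{1−α} + e^{−c₂δ₀/(2h)} M)`. -/
theorem stmt16 (c₁ c₂ C τ₀ δ₀ h : ℝ) (hc₁ : 0 < c₁) (hc₂ : 0 < c₂) (hC : 1 ≤ C)
    (hτ₀ : 1 < τ₀) (hδ₀ : δ₀ ∈ Set.Ioo (0 : ℝ) 1) (hh : 0 < h)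
    (hτδ : τ₀ < δ₀ / (2 * h))
    (A B M : ℝ) (hB0 : 0 ≤ B) (hBA : B ≤ A) (hAM : A ≤ M)
    (hyp : ∀ τ ∈ Set.Ioo τ₀ (δ₀ / h),
      A ≤ C * (Real.exp (c₁ * τ) * B + Real.exp (-c₂ * τ) * M)) :
    A ≤ max (2 * C) (Real.exp ((c₁ + c₂) * (c₂ / (c₁ + c₂)) * τ₀)) *
        (B ^ (c₂ / (c₁ + c₂)) * M ^ (1 - c₂ / (c₁ + c₂))
          + Real.exp (-(c₂ * δ₀ / (2 * h))) * M) := by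
  obtain ⟨hδ0, hδ1⟩ := hδ₀
  set α := c₂ / (c₁ + c₂) with hα
  clear_value α
  have hc12 : 0 < c₁ + c₂ := by linarith
  have hα0 : 0 < α := by rw [hα]; exact div_pos hc₂ hc12
  have hα1 : α < 1 := by rw [hα, div_lt_one hc12]; linarith
  have h1α : 1 - α = c₁ / (c₁ + c₂) := by rw [hα]; field_simp; ring
  have hM0 : 0 ≤ M := le_trans (le_trans hB0 hBA) hAM
  set s := δ₀ / (2 * h) with hs
  clear_value s
  have hs2 : s < δ₀ / h := by
    rw [hs, div_lt_div_iff₀ (by positivity) hh]; nlinarith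
  have hsmem : s ∈ Set.Ioo τ₀ (δ₀ / h) := ⟨hτδ, hs2⟩
  set D := max (2 * C) (Real.exp ((c₁ + c₂) * α * τ₀)) with hD
  clear_value D
  have hD1 : 2 * C ≤ D := by rw [hD]; exact le_max_left _ _
  have hD2 : Real.exp ((c₁ + c₂) * α * τ₀) ≤ D := by rw [hD]; exact le_max_right _ _
  have hD0 : (0:ℝ) < D := lt_of_lt_of_le (by linarith) hD1
  have hpow0 : (0:ℝ) ≤ B ^ α * M ^ (1 - α) := by positivity
  have hes : -(c₂ * δ₀ / (2 * h)) = -c₂ * s := by rw [hs]; ring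
  have hexpM : (0:ℝ) ≤ Real.exp (-(c₂ * δ₀ / (2 * h))) * M := by positivity
  by_cases h1 : B * Real.exp ((c₁ + c₂) * s) ≤ M
  · -- near the right endpoint: use τ = s
    have hA := hyp s hsmem
    have key : Real.exp (c₁ * s) * B ≤ Real.exp (-c₂ * s) * M := by
      have e1 : Real.exp (c₁ * s) * B
          = Real.exp (-c₂ * s) * (B * Real.exp ((c₁ + c₂) * s)) := by
        rw [mul_comm B, ← mul_assoc, ← Real.exp_add]; ring_nf
      rw [e1]
      exact mul_le_mul_of_nonneg_left h1 (Real.exp_nonneg _)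
    have hE : Real.exp (-(c₂ * δ₀ / (2 * h))) * M = Real.exp (-c₂ * s) * M := by
      rw [hes]
    rw [hE]
    have : A ≤ 2 * C * (Real.exp (-c₂ * s) * M) := by nlinarith
    have hE0 : 0 ≤ Real.exp (-c₂ * s) * M := by positivity
    nlinarith [mul_le_mul_of_nonneg_right hD1 hE0, mul_le_mul_of_nonneg_left hpow0 hD0.le]
  · by_cases h2 : M ≤ B * Real.exp ((c₁ + c₂) * τ₀)
    · -- B is comparable to M
      rcases eq_or_lt_of_le hB0 with hB | hB
      · exfalso
        have : M ≤ 0 := by rw [← hB] at h2; simpa using h2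
        have hMz : M = 0 := le_antisymm this hM0
        rw [← hB, hMz] at h1; simp at h1
      · have hMpos : 0 < M := lt_of_lt_of_le hB (le_trans hBA hAM)
        have hMsplit : M = M ^ α * M ^ (1 - α) := by
          rw [← Real.rpow_add hMpos]; norm_num
        have hMα : M ^ α ≤ Real.exp ((c₁ + c₂) * α * τ₀) * B ^ α := by
          calc M ^ α ≤ (B * Real.exp ((c₁ + c₂) * τ₀)) ^ α :=
                Real.rpow_le_rpow hM0 h2 hα0.le
            _ = B ^ α * (Real.exp ((c₁ + c₂) * τ₀)) ^ α :=
                Real.mul_rpow hB0 (Real.exp_nonneg _)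
            _ = Real.exp ((c₁ + c₂) * α * τ₀) * B ^ α := by
                rw [← Real.exp_mul]; ring_nf
        have hstep : M ≤ Real.exp ((c₁ + c₂) * α * τ₀) * (B ^ α * M ^ (1 - α)) := by
          calc M = M ^ α * M ^ (1 - α) := hMsplit
            _ ≤ (Real.exp ((c₁ + c₂) * α * τ₀) * B ^ α) * M ^ (1 - α) :=
                mul_le_mul_of_nonneg_right hMα (by positivity)
            _ = Real.exp ((c₁ + c₂) * α * τ₀) * (B ^ α * M ^ (1 - α)) := by ring
        have hDP : Real.exp ((c₁ + c₂) * α * τ₀) * (B ^ α * M ^ (1 - α))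
            ≤ D * (B ^ α * M ^ (1 - α)) :=
          mul_le_mul_of_nonneg_right hD2 hpow0
        nlinarith [mul_le_mul_of_nonneg_left hexpM hD0.le]
    · -- intermediate case: optimize over τ
      push_neg at h1 h2
      have hB : 0 < B := by
        by_contra hb
        push_neg at hb
        have hBz : B = 0 := le_antisymm hb hB0
        rw [hBz, zero_mul] at h1
        linarith
      have hMpos : 0 < M := lt_of_lt_of_le hB (le_trans hBA hAM)
      set t := (Real.log M - Real.log B) / (c₁ + c₂) with ht
      clear_value t
      have hlog1 : (c₁ + c₂) * τ₀ < Real.log M - Real.log B := by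
        have h2' : Real.log (B * Real.exp ((c₁ + c₂) * τ₀)) < Real.log M :=
          Real.log_lt_log (by positivity) h2
        rw [Real.log_mul hB.ne' (Real.exp_ne_zero _), Real.log_exp] at h2'
        linarith
      have hlog2 : Real.log M - Real.log B < (c₁ + c₂) * s := by
        have h1' : Real.log M < Real.log (B * Real.exp ((c₁ + c₂) * s)) :=
          Real.log_lt_log hMpos h1
        rw [Real.log_mul hB.ne' (Real.exp_ne_zero _), Real.log_exp] at h1'
        linarith
      have htlo : τ₀ < t := by
        rw [ht, lt_div_iff₀ hc12]; linarith [hlog1]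
      have hthi : t < δ₀ / h := by
        have : t < s := by rw [ht, div_lt_iff₀ hc12]; linarith [hlog2]
        linarith
      have hA := hyp t ⟨htlo, hthi⟩
      have hP : B ^ α * M ^ (1 - α)
          = Real.exp (α * Real.log B + (1 - α) * Real.log M) := by
        rw [Real.rpow_def_of_pos hB, Real.rpow_def_of_pos hMpos, ← Real.exp_add]
        ring_nf
      have htmul : (c₁ + c₂) * t = Real.log M - Real.log B := by
        rw [ht, mul_div_cancel₀ _ hc12.ne']
      have hαc : α * (c₁ + c₂) = c₂ := by
        rw [hα, div_mul_cancel₀ _ hc12.ne']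
      have hexp1 : c₁ * t + Real.log B = α * Real.log B + (1 - α) * Real.log M := by
        linear_combination (1 - α) * htmul + t * hαc
      have hexp2 : -c₂ * t + Real.log M = α * Real.log B + (1 - α) * Real.log M := by
        linear_combination t * hαc - α * htmul
      have he1 : Real.exp (c₁ * t) * B = B ^ α * M ^ (1 - α) := by
        calc Real.exp (c₁ * t) * B = Real.exp (c₁ * t + Real.log B) := by
              rw [Real.exp_add, Real.exp_log hB]
          _ = Real.exp (α * Real.log B + (1 - α) * Real.log M) := by rw [hexp1]
          _ = B ^ α * M ^ (1 - α) := hP.symm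
      have he2 : Real.exp (-c₂ * t) * M = B ^ α * M ^ (1 - α) := by
        calc Real.exp (-c₂ * t) * M = Real.exp (-c₂ * t + Real.log M) := by
              rw [Real.exp_add, Real.exp_log hMpos]
          _ = Real.exp (α * Real.log B + (1 - α) * Real.log M) := by rw [hexp2]
          _ = B ^ α * M ^ (1 - α) := hP.symm
      rw [he1, he2] at hA
      have hstep : A ≤ 2 * C * (B ^ α * M ^ (1 - α)) := by linarith
      have h2CP : 2 * C * (B ^ α * M ^ (1 - α)) ≤ D * (B ^ α * M ^ (1 - α)) :=
        mul_le_mul_of_nonneg_right hD1 hpow0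
      have hDE : 0 ≤ D * (Real.exp (-(c₂ * δ₀ / (2 * h))) * M) := mul_nonneg hD0.le hexpM
      have hdistr : D * (B ^ α * M ^ (1 - α)) + D * (Real.exp (-(c₂ * δ₀ / (2 * h))) * M)
          = D * (B ^ α * M ^ (1 - α) + Real.exp (-(c₂ * δ₀ / (2 * h))) * M) := by ring
      linarith only [hstep, h2CP, hDE, hdistr]
end
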